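/- arXiv:2305.15915 — 4 statements merged into one kernel-verified Lean document; each statement's English description precedes it below -/
import Mathlib

section
/- Let (E, ℰ) be a measurable space, ν a probability measure on E, and m : E × E → ℝ a measurable function for which there exist constants 0 < m₋ ≤ m₊ < ∞ with m₋ ≤ m(x,y) ≤ m₊ for all x, y ∈ E. Define the kernel M by M(x,A) = ∫_A m(x,y) ν(dy). Then assumptions (A1)–(A4) hold with V = ψ = 𝟙 (the constant function 1), K = E, ν as given, and constants α = m₋/2, β = m₋, C = m₊, c = d = m₋/m₊. In particular, a kernel admitting a density bounded above and below with respect to a probability measure satisfies the hypotheses of the generalized Harris theorem. -/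
open MeasureTheory ENNReal

/-- The `n`-fold iterate `Mⁿ` of a kernel `M` on `E` (as a map `E → Measure E`):
`M⁰(x,·) = δ_x` and `Mⁿ⁺¹(x,·) = ∫ Mⁿ(y,·) M(x,dy)`. -/
noncomputable def kIter {E : Type*} [MeasurableSpace E] (M : E → Measure E) :
    ℕ → E → Measure E
  | 0 => fun x => Measure.dirac x
  | n + 1 => fun x => (M x).bind (kIter M n)

/-- Assumption (A1): `MV ≤ αV + C·1_K·ψ`. -/
def HarrisA1 {E : Type*} [MeasurableSpace E] (M : E → Measure E)
    (V ψ : E → ℝ) (K : Set E) (α C : ℝ) : Prop :=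
  ∀ x, ∫ y, V y ∂(M x) ≤ α * V x + C * Set.indicator K ψ x

/-- Assumption (A2): `Mψ ≥ βψ`. -/
def HarrisA2 {E : Type*} [MeasurableSpace E] (M : E → Measure E)
    (ψ : E → ℝ) (β : ℝ) : Prop :=
  ∀ x, β * ψ x ≤ ∫ y, ψ y ∂(M x)

/-- Assumption (A3): for every nonnegative measurable `f` and every `x ∈ K`,
`M(fψ)(x) ≥ c·ν(f)·Mψ(x)`. -/
def HarrisA3 {E : Type*} [MeasurableSpace E] (M : E → Measure E)
    (ψ : E → ℝ) (K : Set E) (ν : Measure E) (c : ℝ) : Prop :=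
  ∀ f : E → ℝ≥0∞, Measurable f → ∀ x ∈ K,
    ENNReal.ofReal c * (∫⁻ y, f y ∂ν) * (∫⁻ y, ENNReal.ofReal (ψ y) ∂(M x))
      ≤ ∫⁻ y, f y * ENNReal.ofReal (ψ y) ∂(M x)

/-- Assumption (A4): for every `n ≥ 1`,
`∫ (Mⁿψ/ψ) dν ≥ d · sup_{x ∈ K} Mⁿψ(x)/ψ(x)`. -/
def HarrisA4 {E : Type*} [MeasurableSpace E] (M : E → Measure E)
    (ψ : E → ℝ) (K : Set E) (ν : Measure E) (d : ℝ) : Prop :=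
  ∀ n : ℕ, 1 ≤ n →
    ENNReal.ofReal d *
        (⨆ x ∈ K, (∫⁻ y, ENNReal.ofReal (ψ y) ∂(kIter M n x)) / ENNReal.ofReal (ψ x))
      ≤ ∫⁻ x, (∫⁻ y, ENNReal.ofReal (ψ y) ∂(kIter M n x)) / ENNReal.ofReal (ψ x) ∂ν

/-- Assumptions (A1)–(A4) of the generalized Harris theorem with data
`(V, ψ, K, ν, α, β, C, c, d)`. -/
def HarrisAssumptions {E : Type*} [MeasurableSpace E] (M : E → Measure E)
    (V ψ : E → ℝ) (K : Set E) (ν : Measure E) (α β C c d : ℝ) : Prop :=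
  HarrisA1 M V ψ K α C ∧ HarrisA2 M ψ β ∧ HarrisA3 M ψ K ν c ∧ HarrisA4 M ψ K ν d

/-- **Kernels with bounded density satisfy the Harris assumptions.** If
`M(x,A) = ∫_A m(x,y) ν(dy)` with `0 < m₋ ≤ m(x,y) ≤ m₊ < ∞`, then (A1)–(A4) hold with
`V = ψ = 𝟙`, `K = E`, `ν` as given, and constants `α = m₋/2`, `β = m₋`, `C = m₊`,
`c = d = m₋/m₊`. -/
theorem bounded_density_harris
    {E : Type*} [MeasurableSpace E]
    (ν : Measure E) (hν : IsProbabilityMeasure ν)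
    (m : E → E → ℝ) (hm : Measurable fun p : E × E => m p.1 p.2)
    (mlo mhi : ℝ) (hlo : 0 < mlo) (hlohi : mlo ≤ mhi)
    (hbound : ∀ x y, mlo ≤ m x y ∧ m x y ≤ mhi) :
    HarrisAssumptions (fun x => ν.withDensity fun y => ENNReal.ofReal (m x y))
      (fun _ => (1 : ℝ)) (fun _ => (1 : ℝ)) Set.univ ν
      (mlo / 2) mlo mhi (mlo / mhi) (mlo / mhi) := by
  classical
  have hmhi : 0 < mhi := lt_of_lt_of_le hlo hlohi
  set M : E → Measure E := fun x => ν.withDensity fun y => ENNReal.ofReal (m x y) with hMdef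
  have hmx : ∀ x, Measurable fun y => ENNReal.ofReal (m x y) := fun x =>
    ENNReal.measurable_ofReal.comp (hm.comp measurable_prodMk_left)
  have hMlint : ∀ (x : E) (g : E → ℝ≥0∞),
      ∫⁻ y, g y ∂(M x) = ∫⁻ y, ENNReal.ofReal (m x y) * g y ∂ν := by
    intro x g
    rw [hMdef]
    exact lintegral_withDensity_eq_lintegral_mul_non_measurable ν (hmx x)
      (Filter.Eventually.of_forall fun y => ENNReal.ofReal_lt_top) g
  have hMuniv : ∀ x, M x Set.univ = ∫⁻ y, ENNReal.ofReal (m x y) ∂ν := by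
    intro x
    rw [← lintegral_one, hMlint x]
    simp
  have hMle : ∀ x, M x Set.univ ≤ ENNReal.ofReal mhi := by
    intro x
    rw [hMuniv]
    calc ∫⁻ y, ENNReal.ofReal (m x y) ∂ν ≤ ∫⁻ _, ENNReal.ofReal mhi ∂ν :=
          lintegral_mono fun y => ENNReal.ofReal_le_ofReal (hbound x y).2
      _ = ENNReal.ofReal mhi := by simp
  have hMge : ∀ x, ENNReal.ofReal mlo ≤ M x Set.univ := by
    intro x
    rw [hMuniv]
    calc ENNReal.ofReal mlo = ∫⁻ _, ENNReal.ofReal mlo ∂ν := by simp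
      _ ≤ ∫⁻ y, ENNReal.ofReal (m x y) ∂ν :=
          lintegral_mono fun y => ENNReal.ofReal_le_ofReal (hbound x y).1
  have hMne : ∀ x, M x Set.univ ≠ ⊤ := fun x =>
    ((hMle x).trans_lt ENNReal.ofReal_lt_top).ne
  have hMmeas : Measurable M := by
    apply Measure.measurable_of_measurable_coe
    intro s hs
    set F : E × E → ℝ≥0∞ := (Prod.snd ⁻¹' s).indicator fun p : E × E => ENNReal.ofReal (m p.1 p.2)
      with hF
    have hFmeas : Measurable F :=
      (ENNReal.measurable_ofReal.comp hm).indicator (measurable_snd hs)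
    have : (fun x => M x s) = fun x => ∫⁻ y, F (x, y) ∂ν := by
      funext x
      rw [hMdef]
      simp only
      rw [withDensity_apply _ hs]
      rw [show (fun y => F (x, y)) = s.indicator fun y => ENNReal.ofReal (m x y) by
        funext y; by_cases h : y ∈ s <;> simp [hF, Set.indicator, h]]
      exact (lintegral_indicator hs _).symm
    rw [this]
    exact hFmeas.lintegral_prod_right'
  have hkmeas : ∀ n, Measurable (kIter M n) := by
    intro n
    induction n with
    | zero => exact Measure.measurable_dirac
    | succ n ih => exact (Measure.measurable_bind' ih).comp hMmeas
  have hgmeas : ∀ n, Measurable fun x => kIter M n x Set.univ := fun n =>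
    (Measure.measurable_coe MeasurableSet.univ).comp (hkmeas n)
  have hg_succ : ∀ (n : ℕ) (x : E), kIter M (n + 1) x Set.univ
      = ∫⁻ y, ENNReal.ofReal (m x y) * kIter M n y Set.univ ∂ν := by
    intro n x
    rw [show kIter M (n + 1) x = (M x).bind (kIter M n) from rfl,
      Measure.bind_apply MeasurableSet.univ (hkmeas n).aemeasurable, hMlint x]
  have hconst : ∀ x, ∫ y, (1 : ℝ) ∂(M x) = (M x Set.univ).toReal := by
    intro x; rw [integral_const, smul_eq_mul, mul_one]; rfl
  have htle : ∀ x, (M x Set.univ).toReal ≤ mhi := by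
    intro x
    calc (M x Set.univ).toReal ≤ (ENNReal.ofReal mhi).toReal :=
          ENNReal.toReal_mono ENNReal.ofReal_ne_top (hMle x)
      _ = mhi := ENNReal.toReal_ofReal hmhi.le
  have htge : ∀ x, mlo ≤ (M x Set.univ).toReal := by
    intro x
    calc mlo = (ENNReal.ofReal mlo).toReal := (ENNReal.toReal_ofReal hlo.le).symm
      _ ≤ (M x Set.univ).toReal := ENNReal.toReal_mono (hMne x) (hMge x)
  have hcoef : ENNReal.ofReal (mlo / mhi) * ENNReal.ofReal mhi = ENNReal.ofReal mlo := by
    rw [← ENNReal.ofReal_mul (by positivity), div_mul_cancel₀ _ hmhi.ne']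
  refine ⟨?_, ?_, ?_, ?_⟩
  · -- A1
    intro x
    simp only [Set.indicator_univ, mul_one]
    rw [hconst x]
    have := htle x
    linarith [half_pos hlo]
  · -- A2
    intro x
    rw [mul_one, hconst x]
    exact htge x
  · -- A3
    intro f hf x _
    simp only [ENNReal.ofReal_one, mul_one, lintegral_one]
    calc ENNReal.ofReal (mlo / mhi) * (∫⁻ y, f y ∂ν) * M x Set.univ
        ≤ ENNReal.ofReal (mlo / mhi) * (∫⁻ y, f y ∂ν) * ENNReal.ofReal mhi :=
          mul_le_mul_right (hMle x) _
      _ = ENNReal.ofReal mlo * ∫⁻ y, f y ∂ν := by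
          rw [mul_right_comm, hcoef]
      _ = ∫⁻ y, ENNReal.ofReal mlo * f y ∂ν := (lintegral_const_mul _ hf).symm
      _ ≤ ∫⁻ y, ENNReal.ofReal (m x y) * f y ∂ν :=
          lintegral_mono fun y =>
            mul_le_mul_left (ENNReal.ofReal_le_ofReal (hbound x y).1) _
      _ = ∫⁻ y, f y ∂(M x) := (hMlint x f).symm
  · -- A4
    intro n hn
    obtain ⟨k, rfl⟩ : ∃ k, n = k + 1 := ⟨n - 1, (Nat.succ_pred_eq_of_pos hn).symm⟩
    simp only [ENNReal.ofReal_one, div_one, lintegral_one, iSup_univ,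
      Set.mem_univ, iSup_pos]
    set I : ℝ≥0∞ := ∫⁻ x, kIter M k x Set.univ ∂ν with hI
    have hub : ∀ x, kIter M (k + 1) x Set.univ ≤ ENNReal.ofReal mhi * I := by
      intro x
      rw [hg_succ k x]
      calc ∫⁻ y, ENNReal.ofReal (m x y) * kIter M k y Set.univ ∂ν
          ≤ ∫⁻ y, ENNReal.ofReal mhi * kIter M k y Set.univ ∂ν :=
            lintegral_mono fun y =>
              mul_le_mul_left (ENNReal.ofReal_le_ofReal (hbound x y).2) _
        _ = ENNReal.ofReal mhi * I := lintegral_const_mul _ (hgmeas k)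
    have hlb : ENNReal.ofReal mlo * I ≤ ∫⁻ x, kIter M (k + 1) x Set.univ ∂ν := by
      have hpt : ∀ x, ENNReal.ofReal mlo * I ≤ kIter M (k + 1) x Set.univ := by
        intro x
        rw [hg_succ k x, ← lintegral_const_mul _ (hgmeas k)]
        exact lintegral_mono fun y =>
          mul_le_mul_left (ENNReal.ofReal_le_ofReal (hbound x y).1) _
      calc ENNReal.ofReal mlo * I = ∫⁻ _, ENNReal.ofReal mlo * I ∂ν := by simp
        _ ≤ ∫⁻ x, kIter M (k + 1) x Set.univ ∂ν := lintegral_mono hpt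
    calc ENNReal.ofReal (mlo / mhi) * ⨆ x, kIter M (k + 1) x Set.univ
        ≤ ENNReal.ofReal (mlo / mhi) * (ENNReal.ofReal mhi * I) :=
          mul_le_mul_right (iSup_le hub) _
      _ = ENNReal.ofReal mlo * I := by rw [← mul_assoc, hcoef]
      _ ≤ ∫⁻ x, kIter M (k + 1) x Set.univ ∂ν := hlb
end

section
/- Let a, b > 0 with a < b, and let A = [[−b, 0],[a, −a]]. For every probability row vector μ₀ = (μ₁, μ₂) with μ₂ > 0, the conditional distribution μ_t = μ₀·exp(tA) / ((μ₀·exp(tA))·(1,1)ᵀ) converges, as t → ∞, to the quasi-stationary distribution (a/b, (b−a)/b). -/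
open Matrix

theorem exp_formula (a b : ℝ) (hab : a ≠ b) (t : ℝ) :
    NormedSpace.exp (t • (!![-b, 0; a, -a] : Matrix (Fin 2) (Fin 2) ℝ)) =
      !![Real.exp (-b*t), 0;
         a * (Real.exp (-a*t) - Real.exp (-b*t)) / (b - a), Real.exp (-a*t)] := by
  have hba : a - b ≠ 0 := sub_ne_zero.mpr hab
  set P : Matrix (Fin 2) (Fin 2) ℝ := !![a - b, 0; a, 1] with hP
  set Q : Matrix (Fin 2) (Fin 2) ℝ := !![(a - b)⁻¹, 0; -a * (a - b)⁻¹, 1] with hQ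
  have hPQ : P * Q = 1 := by
    rw [hP, hQ, Matrix.mul_fin_two]
    rw [show (1 : Matrix (Fin 2) (Fin 2) ℝ) = !![1,0;0,1] by
      ext i j; fin_cases i <;> fin_cases j <;> simp]
    congr 1 <;> field_simp <;> ring
    rw [← sub_mul, mul_inv_cancel₀ hba]
  have hPinv : P⁻¹ = Q := Matrix.inv_eq_right_inv hPQ
  have hU : IsUnit P := by
    rw [Matrix.isUnit_iff_isUnit_det, hP, Matrix.det_fin_two_of]
    simpa using hba
  have hconj : t • (!![-b, 0; a, -a] : Matrix (Fin 2) (Fin 2) ℝ)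
      = P * (Matrix.diagonal ![-b*t, -a*t]) * P⁻¹ := by
    rw [hPinv, hP, hQ]
    have : (Matrix.diagonal ![-b*t, -a*t] : Matrix (Fin 2) (Fin 2) ℝ)
        = !![-b*t, 0; 0, -a*t] := by
      ext i j; fin_cases i <;> fin_cases j <;> simp [Matrix.diagonal]
    rw [this, Matrix.mul_fin_two, Matrix.mul_fin_two]
    have hba' : -a + b ≠ 0 := fun h => hba (by linarith)
    ext i j
    fin_cases i <;> fin_cases j <;>
      (try simp [Matrix.smul_apply]) <;> (try field_simp) <;> ring
  rw [hconj, Matrix.exp_conj P _ hU, Matrix.exp_diagonal, Pi.exp_def, hPinv, hP, hQ]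
  have hba' : -a + b ≠ 0 := fun h => hba (by linarith)
  have : (Matrix.diagonal (fun i => NormedSpace.exp (![-b*t, -a*t] i)) : Matrix (Fin 2) (Fin 2) ℝ)
      = !![Real.exp (-b*t), 0; 0, Real.exp (-a*t)] := by
    ext i j; fin_cases i <;> fin_cases j <;> simp [Matrix.diagonal, ← Real.exp_eq_exp_ℝ]
  rw [this, Matrix.mul_fin_two, Matrix.mul_fin_two]
  ext i j
  fin_cases i <;> fin_cases j <;> (try simp)
  · field_simp
  · rw [eq_div_iff (show (b - a : ℝ) ≠ 0 from fun h => hba (by linarith))]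
    field_simp
    ring

/-- **Convergence of the conditional law of the two-state killed chain when `a < b`.**
For every initial probability row vector `μ₀ = (μ₁, μ₂)` with `μ₂ > 0`, the conditional
distribution `μ_t = μ₀·exp(tA) / (μ₀·exp(tA)·(1,1)ᵀ)` converges, as `t → ∞`, to the
quasi-stationary distribution `(a/b, (b−a)/b)`. -/
theorem two_state_conditional_convergence (a b : ℝ) (ha : 0 < a) (hb : 0 < b) (hab : a < b)
    (A : Matrix (Fin 2) (Fin 2) ℝ) (hA : A = !![-b, 0; a, -a]) :
    ∀ μ₀ : Fin 2 → ℝ, (∀ i, 0 ≤ μ₀ i) → μ₀ 0 + μ₀ 1 = 1 → 0 < μ₀ 1 →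
      Filter.Tendsto
        (fun t : ℝ =>
          ((μ₀ ᵥ* NormedSpace.exp (t • A)) 0 + (μ₀ ᵥ* NormedSpace.exp (t • A)) 1)⁻¹ •
            (μ₀ ᵥ* NormedSpace.exp (t • A)))
        Filter.atTop (nhds ![a / b, (b - a) / b]) := by
  subst hA
  intro μ₀ hnn hsum hμ1
  have hba : (0:ℝ) < b - a := by linarith
  have hba' : (b - a : ℝ) ≠ 0 := ne_of_gt hba
  -- the vecMul computed explicitly
  have hexp : ∀ t : ℝ, μ₀ ᵥ* NormedSpace.exp (t • (!![-b, 0; a, -a] : Matrix (Fin 2) (Fin 2) ℝ))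
      = ![μ₀ 0 * Real.exp (-b*t) + μ₀ 1 * (a * (Real.exp (-a*t) - Real.exp (-b*t)) / (b - a)),
          μ₀ 1 * Real.exp (-a*t)] := by
    intro t
    rw [exp_formula a b (ne_of_lt hab) t]
    ext i
    fin_cases i <;>
      simp [Matrix.vecMul, dotProduct, Fin.sum_univ_two]
  set g : ℝ → ℝ := fun x => μ₀ 0 * x + μ₀ 1 * (a * (1 - x) / (b - a)) with hg
  have key : ∀ t : ℝ,
      ((μ₀ ᵥ* NormedSpace.exp (t • (!![-b, 0; a, -a] : Matrix (Fin 2) (Fin 2) ℝ))) 0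
        + (μ₀ ᵥ* NormedSpace.exp (t • (!![-b, 0; a, -a] : Matrix (Fin 2) (Fin 2) ℝ))) 1)⁻¹ •
        (μ₀ ᵥ* NormedSpace.exp (t • (!![-b, 0; a, -a] : Matrix (Fin 2) (Fin 2) ℝ)))
      = (g (Real.exp (-((b-a)*t))) + μ₀ 1)⁻¹ • ![g (Real.exp (-((b-a)*t))), μ₀ 1] := by
    intro t
    set e : ℝ := Real.exp (-(a*t)) with he
    set x : ℝ := Real.exp (-((b-a)*t)) with hx
    have hePos : 0 < e := Real.exp_pos _
    have hbt : Real.exp (-b*t) = e * x := by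
      rw [he, hx, ← Real.exp_add]; ring_nf
    have hat : Real.exp (-a*t) = e := by rw [he]; ring_nf
    rw [hexp t, hbt, hat]
    have hvec : (![μ₀ 0 * (e * x) + μ₀ 1 * (a * (e - e * x) / (b - a)), μ₀ 1 * e]
        : Fin 2 → ℝ) = e • ![g x, μ₀ 1] := by
      ext i
      fin_cases i <;> (try simp [hg]) <;> (try field_simp) <;> ring
    rw [hvec]
    have hsum' : (e • ![g x, μ₀ 1]) 0 + (e • ![g x, μ₀ 1]) 1 = e * (g x + μ₀ 1) := by
      simp [mul_add]
    rw [hsum', smul_smul, mul_inv]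
    rw [show e⁻¹ * (g x + μ₀ 1)⁻¹ * e = (g x + μ₀ 1)⁻¹ * (e⁻¹ * e) by ring]
    rw [inv_mul_cancel₀ (ne_of_gt hePos), mul_one]
  simp only [key]
  -- limits
  have hxlim : Filter.Tendsto (fun t : ℝ => Real.exp (-((b-a)*t))) Filter.atTop (nhds 0) := by
    apply Real.tendsto_exp_atBot.comp
    apply Filter.tendsto_neg_atBot_iff.mpr
    exact Filter.Tendsto.const_mul_atTop hba Filter.tendsto_id
  have hgcont : Continuous g := by
    rw [hg]; continuity
  have hglim : Filter.Tendsto (fun t : ℝ => g (Real.exp (-((b-a)*t)))) Filter.atTop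
      (nhds (g 0)) := (hgcont.tendsto 0).comp hxlim
  have hg0 : g 0 = μ₀ 1 * a / (b - a) := by
    rw [hg]; field_simp
    ring
  have hden : g 0 + μ₀ 1 ≠ 0 := by
    rw [hg0]
    have : 0 < μ₀ 1 * a / (b - a) := by positivity
    linarith
  have hslim : Filter.Tendsto (fun t : ℝ => (g (Real.exp (-((b-a)*t))) + μ₀ 1)⁻¹)
      Filter.atTop (nhds ((g 0 + μ₀ 1)⁻¹)) :=
    (hglim.add tendsto_const_nhds).inv₀ hden
  rw [tendsto_pi_nhds]
  intro i
  fin_cases i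
  · have hval : (g 0 + μ₀ 1)⁻¹ * g 0 = a / b := by
      rw [hg0]
      rw [inv_eq_one_div]
      rw [div_mul_eq_mul_div, one_mul, div_eq_div_iff (by positivity) (ne_of_gt hb)]
      field_simp
      ring
    have h2 : Filter.Tendsto (fun t : ℝ =>
        (g (Real.exp (-((b-a)*t))) + μ₀ 1)⁻¹ * g (Real.exp (-((b-a)*t))))
        Filter.atTop (nhds ((g 0 + μ₀ 1)⁻¹ * g 0)) := hslim.mul hglim
    rw [hval] at h2
    refine h2.congr fun t => ?_
    simp
  · have hval : (g 0 + μ₀ 1)⁻¹ * μ₀ 1 = (b - a) / b := by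
      rw [hg0]
      rw [inv_eq_one_div]
      rw [div_mul_eq_mul_div, one_mul, div_eq_div_iff (by positivity) (ne_of_gt hb)]
      field_simp
      ring
    have h2 : Filter.Tendsto (fun t : ℝ =>
        (g (Real.exp (-((b-a)*t))) + μ₀ 1)⁻¹ * μ₀ 1)
        Filter.atTop (nhds ((g 0 + μ₀ 1)⁻¹ * μ₀ 1)) := hslim.mul tendsto_const_nhds
    rw [hval] at h2
    refine h2.congr fun t => ?_
    simp
end

section
/- Let d ≥ 1, let V : ℝᵈ → ℝ be C¹ and bounded below, and suppose there exists a C¹ map G : ℝᵈ → ℝᵈ such that G and its derivative are bounded on ℝᵈ and ∇V(x)·G(x) → +∞ as |x| → +∞. Then V(x) → +∞ as |x| → +∞. -/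
open Filter

theorem aux_flow_estimate (d : ℕ)
    (V : EuclideanSpace ℝ (Fin d) → ℝ) (hV : ContDiff ℝ 1 V)
    (G : EuclideanSpace ℝ (Fin d) → EuclideanSpace ℝ (Fin d))
    {L : NNReal} (hLip : LipschitzWith L G)
    {K : ℝ} (hK0 : 0 ≤ K) (hK : ∀ y, ‖G y‖ ≤ K)
    {R : ℝ} (hR : ∀ y, R ≤ ‖y‖ → 1 ≤ (inner ℝ (gradient V y) (G y) : ℝ))
    (x : EuclideanSpace ℝ (Fin d)) (T : ℝ) (hT : 0 ≤ T)
    (hx : R + K * T ≤ ‖x‖) :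
    ∃ y, V y + T ≤ V x := by
  -- Picard–Lindelöf on [-T, 0] with t₀ = 0
  have hpl : IsPicardLindelof (fun _ : ℝ => G) (tmin := -T) (tmax := 0)
      ⟨0, neg_nonpos.2 hT, le_rfl⟩ x ⟨K * T, by positivity⟩ 0 ⟨K, hK0⟩ L :=
    IsPicardLindelof.of_time_independent (fun y _ => hK y) hLip.lipschitzOnWith (by
      have : max (0 - 0) (0 - -T) = T := by
        simp [hT]
      simp only [this]
      simp only [NNReal.coe_zero, sub_zero]
      exact (le_refl (K * T)))
  obtain ⟨f, hf0, hf⟩ := hpl.exists_eq_forall_mem_Icc_hasDerivWithinAt₀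
  replace hf0 : f 0 = x := hf0
  have hconv : Convex ℝ (Set.Icc (-T) (0:ℝ)) := convex_Icc _ _
  -- f stays near x
  have hnear : ∀ t ∈ Set.Icc (-T) (0:ℝ), ‖f t - x‖ ≤ K * T := by
    intro t ht
    have h0mem : (0:ℝ) ∈ Set.Icc (-T) (0:ℝ) := ⟨neg_nonpos.2 hT, le_rfl⟩
    have := hconv.norm_image_sub_le_of_norm_hasDerivWithin_le
      (f' := fun t => G (f t)) (C := K) hf (fun t _ => hK (f t)) h0mem ht
    rw [hf0] at this
    refine this.trans ?_
    have habs : ‖t - 0‖ ≤ T := by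
      rw [sub_zero, Real.norm_eq_abs, abs_le]
      exact ⟨ht.1, ht.2.trans hT⟩
    calc K * ‖t - 0‖ ≤ K * T := by nlinarith [norm_nonneg (t - 0)]
      _ = K * T := rfl
  have hfar : ∀ t ∈ Set.Icc (-T) (0:ℝ), R ≤ ‖f t‖ := by
    intro t ht
    have h1 := hnear t ht
    have h2 : ‖x‖ - ‖f t‖ ≤ ‖f t - x‖ := by
      have := norm_sub_norm_le (f t - x + x) (f t)
      simpa using (norm_sub_norm_le x (f t)).trans_eq (by rw [norm_sub_rev])
    linarith
  -- derivative of V ∘ f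
  have hVf : ∀ t ∈ Set.Icc (-T) (0:ℝ),
      HasDerivWithinAt (fun s => V (f s)) ((inner ℝ (gradient V (f t)) (G (f t)) : ℝ))
        (Set.Icc (-T) 0) t := by
    intro t ht
    have hdV : HasFDerivAt V ((InnerProductSpace.toDual ℝ _) (gradient V (f t))) (f t) :=
      (hV.differentiable one_ne_zero (f t)).hasGradientAt.hasFDerivAt
    have := hdV.comp_hasDerivWithinAt t (hf t ht)
    rw [InnerProductSpace.toDual_apply_apply] at this
    exact this
  -- the function g t = V (f t) - t is monotone on [-T, 0]
  have hg : MonotoneOn (fun t => V (f t) - t) (Set.Icc (-T) (0:ℝ)) := by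
    refine monotoneOn_of_deriv_nonneg hconv ?_ ?_ ?_
    · intro t ht
      exact ((hVf t ht).sub (hasDerivWithinAt_id t _)).continuousWithinAt
    · intro t ht
      rw [interior_Icc] at ht
      have hmem : t ∈ Set.Icc (-T) (0:ℝ) := Set.Ioo_subset_Icc_self ht
      have hd : HasDerivAt (fun s => V (f s) - s)
          ((inner ℝ (gradient V (f t)) (G (f t)) : ℝ) - 1) t :=
        ((hVf t hmem).sub (hasDerivWithinAt_id t _)).hasDerivAt
          (Icc_mem_nhds ht.1 ht.2)
      exact hd.differentiableAt.differentiableWithinAt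
    · intro t ht
      rw [interior_Icc] at ht
      have hmem : t ∈ Set.Icc (-T) (0:ℝ) := Set.Ioo_subset_Icc_self ht
      have hd : HasDerivAt (fun s => V (f s) - s)
          ((inner ℝ (gradient V (f t)) (G (f t)) : ℝ) - 1) t :=
        ((hVf t hmem).sub (hasDerivWithinAt_id t _)).hasDerivAt
          (Icc_mem_nhds ht.1 ht.2)
      rw [hd.deriv]
      have := hR (f t) (hfar t hmem)
      linarith
  have hTmem : (-T) ∈ Set.Icc (-T) (0:ℝ) := ⟨le_rfl, neg_nonpos.2 hT⟩
  have h0mem : (0:ℝ) ∈ Set.Icc (-T) (0:ℝ) := ⟨neg_nonpos.2 hT, le_rfl⟩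
  have := hg hTmem h0mem (neg_nonpos.2 hT)
  refine ⟨f (-T), ?_⟩
  simp only [hf0] at this ⊢
  linarith

/-- **(Av1) + (Av2) imply that the potential is confining.** If `V : ℝᵈ → ℝ` is `C¹` and
bounded below, and there is a `C¹` map `G : ℝᵈ → ℝᵈ` with `G` and its derivative bounded and
`∇V(x)·G(x) → +∞` as `|x| → +∞`, then `V(x) → +∞` as `|x| → +∞`. -/
theorem confining_potential_of_Av1_Av2 (d : ℕ) (hd : 1 ≤ d)
    (V : EuclideanSpace ℝ (Fin d) → ℝ) (hV : ContDiff ℝ 1 V)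
    (hVbdd : BddBelow (Set.range V))
    (G : EuclideanSpace ℝ (Fin d) → EuclideanSpace ℝ (Fin d)) (hG : ContDiff ℝ 1 G)
    (hGbdd : ∃ CG : ℝ, ∀ x, ‖G x‖ ≤ CG)
    (hG'bdd : ∃ CG' : ℝ, ∀ x, ‖fderiv ℝ G x‖ ≤ CG')
    (hVG : Tendsto (fun x => (inner ℝ (gradient V x) (G x) : ℝ))
      (Filter.comap (fun x => ‖x‖) atTop) atTop) :
    Tendsto V (Filter.comap (fun x => ‖x‖) atTop) atTop := by
  obtain ⟨c, hc⟩ := hVbdd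
  obtain ⟨CG, hCG⟩ := hGbdd
  obtain ⟨CL, hCL⟩ := hG'bdd
  set K : ℝ := max CG 1 with hKdef
  have hK1 : (1:ℝ) ≤ K := le_max_right _ _
  have hK0 : (0:ℝ) ≤ K := by linarith
  have hK : ∀ y, ‖G y‖ ≤ K := fun y => (hCG y).trans (le_max_left _ _)
  have hLip : LipschitzWith CL.toNNReal G := by
    apply lipschitzWith_of_nnnorm_fderiv_le (fun y => hG.differentiable one_ne_zero y)
    intro y
    rw [← NNReal.coe_le_coe, coe_nnnorm, Real.coe_toNNReal']
    exact (hCL y).trans (le_max_left _ _)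
  -- extract uniform lower bound on inner product
  have hev : ∀ᶠ x in Filter.comap (fun x : EuclideanSpace ℝ (Fin d) => ‖x‖) atTop,
      1 ≤ (inner ℝ (gradient V x) (G x) : ℝ) := hVG.eventually (eventually_ge_atTop 1)
  rw [Filter.eventually_comap, eventually_atTop] at hev
  obtain ⟨R, hRev⟩ := hev
  have hR : ∀ y : EuclideanSpace ℝ (Fin d), R ≤ ‖y‖ →
      1 ≤ (inner ℝ (gradient V y) (G y) : ℝ) := fun y hy => hRev ‖y‖ hy y rfl
  rw [tendsto_atTop]
  intro b
  rw [Filter.eventually_comap, eventually_atTop]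
  refine ⟨max R (R + K * (b - c)), fun r hr x hxr => ?_⟩
  have hxR : R ≤ ‖x‖ := by
    rw [hxr]; exact (le_max_left _ _).trans hr
  have hxb : R + K * (b - c) ≤ ‖x‖ := by
    rw [hxr]; exact (le_max_right _ _).trans hr
  set T : ℝ := (‖x‖ - R) / K with hTdef
  have hT : 0 ≤ T := div_nonneg (by linarith) hK0
  have hKT : K * T = ‖x‖ - R := by
    rw [hTdef, mul_div_cancel₀]
    linarith
  obtain ⟨y, hy⟩ := aux_flow_estimate d V hV G hLip hK0 hK hR x T hT (by linarith)
  have hcy : c ≤ V y := hc ⟨y, rfl⟩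
  have hTb : b - c ≤ T := by
    rw [hTdef, le_div_iff₀ (by linarith : (0:ℝ) < K)]
    nlinarith
  linarith
end

section
/- With the notation of the discretized killed diffusion on the torus, let μ₀ be a probability measure on 𝕋ᵈ and define the nonlinear Markov chain of laws by η̃₀ = μ₀ and η̃_{n+1}(A) = ∫_{𝕋ᵈ} Q_{η̃_n}(x, A) η̃_n(dx) for all Borel A. Then for every n ≥ 0, η̃_n = μ₀K̃ⁿ / (μ₀K̃ⁿ)(𝕋ᵈ), i.e. η̃_n equals the law of the discretized killed chain at time n conditioned on survival up to time n: η̃_n(A) = (∫ K̃ⁿ(x,A) μ₀(dx)) / (∫ K̃ⁿ(x,𝕋ᵈ) μ₀(dx)). -/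
open MeasureTheory ProbabilityTheory ENNReal

/-- The `d`-dimensional flat torus `𝕋ᵈ = (ℝ/ℤ)ᵈ`. -/
abbrev Torus (d : ℕ) := Fin d → AddCircle (1 : ℝ)

/-- The quotient map `q : ℝᵈ → 𝕋ᵈ`. -/
noncomputable def torusQuot (d : ℕ) (x : Fin d → ℝ) : Torus d := fun i => (x i : AddCircle (1 : ℝ))

/-- The canonical lift `𝕋ᵈ → ℝᵈ` with coordinates in `[0,1)`. -/
noncomputable def torusLift (d : ℕ) (x : Torus d) : Fin d → ℝ :=
  fun i => (AddCircle.equivIco 1 0 (x i) : ℝ)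

/-- The Gaussian measure `𝒩(m, γ I_d)` on `ℝᵈ` (product of one-dimensional Gaussians). -/
noncomputable def gaussPi (d : ℕ) (m : Fin d → ℝ) (γ : ℝ) : Measure (Fin d → ℝ) :=
  Measure.pi fun i => gaussianReal (m i) γ.toNNReal

/-- The Euler–Maruyama kernel `K^γ` on the torus: `K^γ(x,·)` is the pushforward under the
quotient map of the Gaussian `𝒩(x̃ + γ b(x), γ I_d)`, `x̃` being the canonical lift of `x`. -/
noncomputable def eulerKernel (d : ℕ) (b : Torus d → Fin d → ℝ) (γ : ℝ) (x : Torus d) :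
    Measure (Torus d) :=
  (gaussPi d (torusLift d x + γ • b x) γ).map (torusQuot d)

/-- The sub-Markov "move then survive" kernel
`K̃(x,dy) = (1 − p(y)) K^γ(x,dy) = e^{−γλ(y)} K^γ(x,dy)`. -/
noncomputable def killedKernel (d : ℕ) (b : Torus d → Fin d → ℝ) (γ : ℝ)
    (lam : Torus d → ℝ) (x : Torus d) : Measure (Torus d) :=
  (eulerKernel d b γ x).withDensity fun y => ENNReal.ofReal (Real.exp (-γ * lam y))

/-- The resurrection (Markov) kernel
`Q_μ(x,·) = K̃(x,·) + (1 − K̃(x,𝕋ᵈ)) · μK̃(·)/μK̃(𝕋ᵈ)`. -/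
noncomputable def resKernel (d : ℕ) (b : Torus d → Fin d → ℝ) (γ : ℝ)
    (lam : Torus d → ℝ) (μ : Measure (Torus d)) (x : Torus d) : Measure (Torus d) :=
  killedKernel d b γ lam x +
    (1 - killedKernel d b γ lam x Set.univ) •
      ((μ.bind (killedKernel d b γ lam)) Set.univ)⁻¹ • μ.bind (killedKernel d b γ lam)

open scoped NNReal

section Aux

variable {d : ℕ}

lemma measurable_torusLift : Measurable (torusLift d) := by
  apply measurable_pi_lambda
  intro i
  have h : Measurable (⇑(AddCircle.measurableEquivIco (T := (1:ℝ)) 0)) :=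
    (AddCircle.measurableEquivIco (T := (1:ℝ)) 0).measurable
  exact (measurable_subtype_coe.comp h).comp (measurable_pi_apply i)

lemma measurable_torusQuot : Measurable (torusQuot d) :=
  measurable_pi_lambda _ fun i => AddCircle.measurable_mk'.comp (measurable_pi_apply i)

lemma torusQuot_torusLift (x : Torus d) : torusQuot d (torusLift d x) = x :=
  funext fun i => (AddCircle.equivIco 1 0).symm_apply_apply (x i)

lemma measurable_addm (m : Fin d → ℝ) : Measurable fun y : Fin d → ℝ => y + m :=
  measurable_pi_lambda _ fun i => by fun_prop

lemma gaussPi_map_add (γ : ℝ) (m : Fin d → ℝ) :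
    (gaussPi d 0 γ).map (fun y => y + m) = gaussPi d m γ := by
  refine (Measure.pi_eq fun s hs => ?_).symm
  rw [Measure.map_apply (measurable_addm m) (MeasurableSet.univ_pi hs)]
  have hpre : (fun y : Fin d → ℝ => y + m) ⁻¹' (Set.pi Set.univ s)
      = Set.pi Set.univ (fun i => (· + m i) ⁻¹' (s i)) := by
    ext y; simp [Set.mem_pi]
  rw [hpre, gaussPi, Measure.pi_pi]
  refine Finset.prod_congr rfl fun i _ => ?_
  have h0 : (0 : Fin d → ℝ) i = 0 := rfl
  rw [h0, ← Measure.map_apply (measurable_add_const (m i)) (hs i)]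
  have := gaussianReal_map_add_const (μ := 0) (v := γ.toNNReal) (m i)
  rw [zero_add] at this
  rw [this]

lemma eulerKernel_eq (b : Torus d → Fin d → ℝ) (γ : ℝ) (x : Torus d) :
    eulerKernel d b γ x = ((gaussPi d 0 γ).map (torusQuot d)).map
      (· + torusQuot d (torusLift d x + γ • b x)) := by
  rw [eulerKernel, ← gaussPi_map_add γ (torusLift d x + γ • b x),
    Measure.map_map measurable_torusQuot (measurable_addm _),
    Measure.map_map (measurable_add_const _) measurable_torusQuot]
  rfl

lemma gaussPi_prob (m : Fin d → ℝ) (γ : ℝ) : IsProbabilityMeasure (gaussPi d m γ) := by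
  rw [gaussPi]; infer_instance

lemma euler_prob (b : Torus d → Fin d → ℝ) (γ : ℝ) (x : Torus d) :
    IsProbabilityMeasure (eulerKernel d b γ x) := by
  rw [eulerKernel]
  haveI := gaussPi_prob (d := d) (torusLift d x + γ • b x) γ
  exact Measure.isProbabilityMeasure_map measurable_torusQuot.aemeasurable

lemma measurable_euler (b : Torus d → Fin d → ℝ) (γ : ℝ) (hb : Measurable b) :
    Measurable (eulerKernel d b γ) := by
  rw [Measure.measurable_measure]
  intro s hs
  haveI : IsProbabilityMeasure (gaussPi d 0 γ) := gaussPi_prob _ _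
  haveI : IsProbabilityMeasure ((gaussPi d 0 γ).map (torusQuot d)) :=
    Measure.isProbabilityMeasure_map measurable_torusQuot.aemeasurable
  have hT : Measurable fun x : Torus d => torusQuot d (torusLift d x + γ • b x) :=
    measurable_torusQuot.comp (measurable_torusLift.add (hb.const_smul γ))
  have key : ∀ x, eulerKernel d b γ x s = ((gaussPi d 0 γ).map (torusQuot d))
      (Prod.mk x ⁻¹' {p : Torus d × Torus d |
        p.2 + torusQuot d (torusLift d p.1 + γ • b p.1) ∈ s}) := by
    intro x
    rw [eulerKernel_eq, Measure.map_apply (measurable_add_const _) hs]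
    rfl
  simp_rw [key]
  exact measurable_measure_prodMk_left
    ((measurable_snd.add (hT.comp measurable_fst)) hs)

lemma measurable_killed (b : Torus d → Fin d → ℝ) (γ : ℝ) (lam : Torus d → ℝ)
    (hb : Measurable b) (hlam : Measurable lam) :
    Measurable (killedKernel d b γ lam) := by
  have hf : Measurable fun y : Torus d => ENNReal.ofReal (Real.exp (-γ * lam y)) :=
    ENNReal.measurable_ofReal.comp (Real.measurable_exp.comp (measurable_const.mul hlam))
  rw [Measure.measurable_measure]
  intro s hs
  have key : ∀ x, killedKernel d b γ lam x s
      = ∫⁻ y, s.indicator (fun y => ENNReal.ofReal (Real.exp (-γ * lam y))) y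
          ∂(eulerKernel d b γ x) := by
    intro x
    rw [killedKernel, withDensity_apply _ hs, lintegral_indicator hs]
  simp_rw [key]
  exact (Measure.measurable_lintegral (hf.indicator hs)).comp (measurable_euler b γ hb)

lemma killed_univ_le_one (b : Torus d → Fin d → ℝ) {γ : ℝ} (hγ : 0 < γ)
    {lam : Torus d → ℝ} (hlam0 : ∀ x, 0 ≤ lam x) (x : Torus d) :
    killedKernel d b γ lam x Set.univ ≤ 1 := by
  haveI := euler_prob b γ x
  rw [killedKernel, withDensity_apply _ MeasurableSet.univ, Measure.restrict_univ]
  calc ∫⁻ y, ENNReal.ofReal (Real.exp (-γ * lam y)) ∂(eulerKernel d b γ x)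
      ≤ ∫⁻ _, 1 ∂(eulerKernel d b γ x) := by
        refine lintegral_mono fun y => ?_
        refine ENNReal.ofReal_le_one.mpr (Real.exp_le_one_iff.mpr ?_)
        have : 0 ≤ γ * lam y := mul_nonneg hγ.le (hlam0 y)
        linarith
    _ = 1 := by simp

lemma killed_univ_ge (b : Torus d → Fin d → ℝ) {γ : ℝ} (hγ : 0 < γ)
    {lam : Torus d → ℝ} {L : ℝ≥0} (hlip : LipschitzWith L lam) :
    ∃ ε : ℝ≥0∞, ε ≠ 0 ∧ ∀ x, ε ≤ killedKernel d b γ lam x Set.univ := by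
  obtain ⟨x₀, -, hx₀⟩ := isCompact_univ.exists_isMaxOn (Set.univ_nonempty)
    hlip.continuous.continuousOn
  refine ⟨ENNReal.ofReal (Real.exp (-γ * lam x₀)),
    (ENNReal.ofReal_pos.mpr (Real.exp_pos _)).ne', fun x => ?_⟩
  haveI := euler_prob b γ x
  rw [killedKernel, withDensity_apply _ MeasurableSet.univ, Measure.restrict_univ]
  calc ENNReal.ofReal (Real.exp (-γ * lam x₀))
      = ∫⁻ _, ENNReal.ofReal (Real.exp (-γ * lam x₀)) ∂(eulerKernel d b γ x) := by simp
    _ ≤ ∫⁻ y, ENNReal.ofReal (Real.exp (-γ * lam y)) ∂(eulerKernel d b γ x) := by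
        refine lintegral_mono fun y => ENNReal.ofReal_le_ofReal (Real.exp_le_exp.mpr ?_)
        have h1 : lam y ≤ lam x₀ := hx₀ (Set.mem_univ y)
        nlinarith

lemma measurable_kIter {E : Type*} [MeasurableSpace E] {M : E → Measure E}
    (hM : Measurable M) (n : ℕ) : Measurable (kIter M n) := by
  induction n with
  | zero => exact Measure.measurable_dirac
  | succ n ih => exact (Measure.measurable_bind' ih).comp hM

lemma bind_kIter_zero {E : Type*} [MeasurableSpace E] (M : E → Measure E) (μ : Measure E) :
    μ.bind (kIter M 0) = μ := by
  show μ.bind (fun x => Measure.dirac x) = μ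
  exact Measure.bind_dirac

lemma bind_kIter_succ {E : Type*} [MeasurableSpace E] {M : E → Measure E}
    (hM : Measurable M) (μ : Measure E) (n : ℕ) :
    μ.bind (kIter M (n + 1)) = (μ.bind (kIter M n)).bind M := by
  induction n generalizing μ with
  | zero =>
    rw [bind_kIter_zero]
    show μ.bind (fun x => (M x).bind (kIter M 0)) = μ.bind M
    congr 1
    funext x
    exact bind_kIter_zero M (M x)
  | succ n ih =>
    have h1 : μ.bind (kIter M (n + 2)) = (μ.bind M).bind (kIter M (n + 1)) :=
      (Measure.bind_bind hM.aemeasurable (measurable_kIter hM (n + 1)).aemeasurable).symm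
    rw [h1, ih (μ.bind M), Measure.bind_bind hM.aemeasurable (measurable_kIter hM n).aemeasurable]
    rfl

lemma bind_smul_meas {E F : Type*} [MeasurableSpace E] [MeasurableSpace F]
    (c : ℝ≥0∞) (μ : Measure E) {f : E → Measure F} (hf : Measurable f) :
    (c • μ).bind f = c • μ.bind f := by
  ext s hs
  rw [Measure.bind_apply hs hf.aemeasurable, Measure.smul_apply, Measure.bind_apply hs hf.aemeasurable,
    lintegral_smul_measure, smul_eq_mul]

lemma resurrect_step {d : ℕ} {b : Torus d → Fin d → ℝ} {γ : ℝ} {lam : Torus d → ℝ}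
    (hK : Measurable (killedKernel d b γ lam))
    (hK1 : ∀ x, killedKernel d b γ lam x Set.univ ≤ 1)
    (ν : Measure (Torus d)) [IsProbabilityMeasure ν]
    (hm0 : (ν.bind (killedKernel d b γ lam)) Set.univ ≠ 0) :
    ν.bind (resKernel d b γ lam ν)
      = ((ν.bind (killedKernel d b γ lam)) Set.univ)⁻¹ • ν.bind (killedKernel d b γ lam) := by
  set K := killedKernel d b γ lam with hKdef
  set m := ν.bind K with hmdef
  set t := m Set.univ with htdef
  have hm_le : ∀ s : Set (Torus d), MeasurableSet s → m s = ∫⁻ x, K x s ∂ν :=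
    fun s hs => Measure.bind_apply hs hK.aemeasurable
  have ht1 : t ≤ 1 := by
    rw [htdef, hm_le Set.univ MeasurableSet.univ]
    calc ∫⁻ x, K x Set.univ ∂ν ≤ ∫⁻ _, 1 ∂ν := lintegral_mono fun x => hK1 x
      _ = 1 := by simp
  have htne : t ≠ ∞ := (lt_of_le_of_lt ht1 one_lt_top).ne
  have hQmeas : Measurable (resKernel d b γ lam ν) := by
    have h2 : Measurable fun x : Torus d =>
        (1 - K x Set.univ) • ((m Set.univ)⁻¹ • m) := by
      apply Measure.measurable_of_measurable_coe
      intro s hs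
      simp only [Measure.smul_apply, smul_eq_mul]
      exact (measurable_const.sub
        ((Measure.measurable_coe MeasurableSet.univ).comp hK)).mul_const _
    exact hK.add h2
  have hKu : Measurable fun x => K x Set.univ :=
    (Measure.measurable_coe MeasurableSet.univ).comp hK
  have hKs : ∀ s : Set (Torus d), MeasurableSet s → Measurable fun x => K x s :=
    fun s hs => (Measure.measurable_coe hs).comp hK
  ext s hs
  rw [Measure.bind_apply hs hQmeas.aemeasurable, Measure.smul_apply, smul_eq_mul]
  have hexp : ∀ x, resKernel d b γ lam ν x s
      = K x s + (1 - K x Set.univ) * (t⁻¹ * m s) := by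
    intro x
    rw [resKernel]
    simp only [Measure.add_apply, Measure.smul_apply, smul_eq_mul, ← hKdef, ← hmdef, ← htdef]
  simp_rw [hexp]
  rw [lintegral_add_left (hKs s hs), lintegral_mul_const _ (f := fun x => 1 - K x Set.univ) (measurable_const.sub hKu)]
  have hfin : ∫⁻ x, K x Set.univ ∂ν ≠ ∞ := by
    rw [← hm_le _ MeasurableSet.univ, ← htdef]; exact htne
  have hsub : ∫⁻ x, (1 - K x Set.univ) ∂ν = 1 - t := by
    have h := lintegral_sub hKu hfin (Filter.Eventually.of_forall fun x => hK1 x)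
      (f := fun _ => (1 : ℝ≥0∞))
    rw [h, lintegral_one, measure_univ, htdef, hm_le _ MeasurableSet.univ]
  rw [hsub, ← hm_le s hs]
  have hm0' : t ≠ 0 := by rwa [htdef, hmdef]
  have key : t⁻¹ * m s = m s + (1 - t) * (t⁻¹ * m s) := by
    conv_lhs => rw [← one_mul (t⁻¹ * m s), ← add_tsub_cancel_of_le ht1]
    rw [add_mul, ← mul_assoc, ENNReal.mul_inv_cancel hm0' htne, one_mul]
  exact key.symm

end Aux

/-- **The nonlinear chain is the discretized killed chain conditioned on survival.**
Starting from a probability measure `μ₀` on `𝕋ᵈ`, the nonlinear chain of laws defined by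
`η̃₀ = μ₀` and `η̃_{n+1} = η̃_n Q_{η̃_n}` satisfies, for every `n`,
`η̃_n = μ₀K̃ⁿ / (μ₀K̃ⁿ)(𝕋ᵈ)`, the law at time `n` of the discretized killed chain
conditioned on survival up to time `n`. -/
theorem nonlinear_chain_eq_conditional_law
    (d : ℕ) (b : Torus d → Fin d → ℝ)
    (hb : ∃ B : (Fin d → ℝ) → Fin d → ℝ, ContDiff ℝ 1 B ∧
      ∀ x : Fin d → ℝ, B x = b (torusQuot d x))
    (γ : ℝ) (hγ : 0 < γ)
    (lam : Torus d → ℝ) (hlam0 : ∀ x, 0 ≤ lam x)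
    (L : ℝ≥0) (hlip : LipschitzWith L lam)
    (μ₀ : Measure (Torus d)) (hμ₀ : IsProbabilityMeasure μ₀)
    (η : ℕ → Measure (Torus d)) (hη0 : η 0 = μ₀)
    (hηrec : ∀ n : ℕ, η (n + 1) = (η n).bind (resKernel d b γ lam (η n))) :
    ∀ n : ℕ,
      η n = ((μ₀.bind (kIter (killedKernel d b γ lam) n)) Set.univ)⁻¹ •
        μ₀.bind (kIter (killedKernel d b γ lam) n) := by
  have hbm : Measurable b := by
    obtain ⟨B, hB, hBb⟩ := hb
    have : b = fun x => B (torusLift d x) := by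
      funext x
      rw [hBb (torusLift d x), torusQuot_torusLift]
    rw [this]
    exact hB.continuous.measurable.comp measurable_torusLift
  have hK : Measurable (killedKernel d b γ lam) :=
    measurable_killed b γ lam hbm hlip.continuous.measurable
  set K := killedKernel d b γ lam with hKdef
  have hK1 : ∀ x, K x Set.univ ≤ 1 := killed_univ_le_one b hγ hlam0
  obtain ⟨ε, hε0, hεle⟩ := killed_univ_ge b hγ hlip
  set ν : ℕ → Measure (Torus d) := fun n => μ₀.bind (kIter K n) with hνdef
  have hcs : ∀ n, ν n Set.univ ≠ 0 ∧ ν n Set.univ ≤ 1 := by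
    intro n
    induction n with
    | zero =>
      rw [hνdef]
      simp only [bind_kIter_zero]
      exact ⟨by simp, by simp⟩
    | succ k ihk =>
      have hrw : ν (k + 1) Set.univ = ∫⁻ x, K x Set.univ ∂(ν k) := by
        rw [hνdef]
        simp only
        rw [bind_kIter_succ hK, Measure.bind_apply MeasurableSet.univ hK.aemeasurable]
      constructor
      · have h1 : ε * ν k Set.univ ≤ ∫⁻ x, K x Set.univ ∂(ν k) := by
          calc ε * ν k Set.univ = ∫⁻ _, ε ∂(ν k) := by rw [lintegral_const, mul_comm]
            _ ≤ ∫⁻ x, K x Set.univ ∂(ν k) := lintegral_mono fun x => hεle x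
        have hpos : 0 < ε * ν k Set.univ := ENNReal.mul_pos hε0 ihk.1
        rw [hrw]
        exact (lt_of_lt_of_le hpos h1).ne'
      · rw [hrw]
        calc ∫⁻ x, K x Set.univ ∂(ν k) ≤ ∫⁻ _, 1 ∂(ν k) := lintegral_mono fun x => hK1 x
          _ = ν k Set.univ := by rw [lintegral_one]
          _ ≤ 1 := ihk.2
  intro n
  induction n with
  | zero =>
    rw [hη0]
    have h0 : μ₀.bind (kIter K 0) = μ₀ := bind_kIter_zero K μ₀
    rw [h0, measure_univ, inv_one, one_smul]
  | succ n ih =>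
    have hcn := hcs n
    have hcn1 := hcs (n + 1)
    have hcn_fin : ν n Set.univ ≠ ∞ := (lt_of_le_of_lt hcn.2 ENNReal.one_lt_top).ne
    have hcn1_fin : ν (n + 1) Set.univ ≠ ∞ := (lt_of_le_of_lt hcn1.2 ENNReal.one_lt_top).ne
    haveI : IsProbabilityMeasure (η n) := by
      constructor
      rw [ih, Measure.smul_apply, smul_eq_mul]
      exact ENNReal.inv_mul_cancel hcn.1 hcn_fin
    have hν1 : ν (n + 1) = (ν n).bind K := bind_kIter_succ hK μ₀ n
    have hm : (η n).bind K = ((ν n Set.univ)⁻¹ : ℝ≥0∞) • ν (n + 1) := by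
      rw [ih, bind_smul_meas _ _ hK, hν1]
    have hm0 : ((η n).bind K) Set.univ ≠ 0 := by
      rw [hm, Measure.smul_apply, smul_eq_mul]
      exact mul_ne_zero (ENNReal.inv_ne_zero.mpr hcn_fin) hcn1.1
    rw [hηrec n, resurrect_step hK hK1 (η n) hm0, hm, Measure.smul_apply, smul_eq_mul,
      smul_smul]
    congr 1
    rw [ENNReal.mul_inv (Or.inl (ENNReal.inv_ne_zero.mpr hcn_fin))
      (Or.inr hcn1.1), inv_inv]
    rw [mul_right_comm, ENNReal.mul_inv_cancel hcn.1 hcn_fin, one_mul]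
end
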